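/- If an element of SL(3,ℤ) has all three eigenvalues within distance 1/2 of 1 in ℂ, then all its eigenvalues equal 1 (its characteristic polynomial is (x-1)³). -/

import Mathlib

open Polynomial

lemma int_abs_lt_one (m : ℤ) (h : ‖(m : ℂ)‖ < 1) : (m : ℂ) = 0 := by
  rw [Complex.norm_intCast] at h
  have hm : |(m:ℝ)| < 1 := h
  have : m = 0 := by
    have h2 : |m| < 1 := by exact_mod_cast hm
    have := abs_lt.mp h2
    omega
  simp [this]

open Polynomial in
/-- If an element of `SL(3,ℤ)` has all three (complex) eigenvalues within distance `1/2` of `1`,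
then all its eigenvalues equal `1`, i.e. its characteristic polynomial is `(X - 1)³`. -/
theorem sl3z_eigenvalues_near_one_eq_one
    (M : Matrix (Fin 3) (Fin 3) ℤ)
    (hdet : M.det = 1)
    (l0 l1 l2 : ℂ)
    (hchar : (M.map (Int.cast : ℤ → ℂ)).charpoly = (X - C l0) * (X - C l1) * (X - C l2))
    (h0 : ‖l0 - 1‖ < 1/2)
    (h1 : ‖l1 - 1‖ < 1/2)
    (h2 : ‖l2 - 1‖ < 1/2) :
    l0 = 1 ∧ l1 = 1 ∧ l2 = 1 := by
  set s1 := l0 + l1 + l2 with hs1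
  set s2 := l0*l1 + l0*l2 + l1*l2 with hs2
  set s3 := l0*l1*l2 with hs3
  have hmap : (M.charpoly).map (Int.castRingHom ℂ) = (X - C l0) * (X - C l1) * (X - C l2) := by
    rw [← Matrix.charpoly_map]; exact hchar
  have hexp : (X - C l0) * (X - C l1) * (X - C l2)
      = X^3 - C s1 * X^2 + C s2 * X - C s3 := by
    simp only [hs1, hs2, hs3, map_add, map_mul]; ring
  have hc : ∀ k, ((M.charpoly.coeff k : ℤ) : ℂ)
      = (X^3 - C s1 * X^2 + C s2 * X - C s3).coeff k := by
    intro k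
    rw [← hexp, ← hmap, coeff_map]; rfl
  have hc2 : ((M.charpoly.coeff 2 : ℤ) : ℂ) = -s1 := by
    have := hc 2; simpa [coeff_X_pow] using this
  have hc1 : ((M.charpoly.coeff 1 : ℤ) : ℂ) = s2 := by
    have := hc 1; simpa [coeff_X_pow] using this
  have hc0 : M.charpoly.coeff 0 = -1 := by
    have := Matrix.det_eq_sign_charpoly_coeff M
    rw [hdet] at this
    simp at this
    linarith
  have hc0' : ((M.charpoly.coeff 0 : ℤ) : ℂ) = -s3 := by
    have := hc 0; simpa [coeff_X_pow] using this
  have hs3_1 : s3 = 1 := by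
    rw [hc0] at hc0'; push_cast at hc0'; linear_combination hc0'
  set n1 := M.charpoly.coeff 2 with hn1
  set n2 := M.charpoly.coeff 1 with hn2
  have hE1 : (l0-1)+(l1-1)+(l2-1) = ((-n1 - 3 : ℤ) : ℂ) := by
    push_cast; linear_combination hc2
  have hE2 : (l0-1)*(l1-1)+(l0-1)*(l2-1)+(l1-1)*(l2-1) = ((n2 + 2*n1 + 3 : ℤ) : ℂ) := by
    push_cast; linear_combination -hc1 - 2*hc2
  have hE3 : (l0-1)*(l1-1)*(l2-1) = ((-n1 - n2 : ℤ) : ℂ) := by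
    push_cast; linear_combination hs3_1 + hc1 + hc2
  have hsum : ((l0-1)+(l1-1)+(l2-1)) + ((l0-1)*(l1-1)+(l0-1)*(l2-1)+(l1-1)*(l2-1))
      + (l0-1)*(l1-1)*(l2-1) = 0 := by linear_combination hs3_1
  have habs3 : ‖(l0-1)*(l1-1)*(l2-1)‖ < 1 := by
    rw [norm_mul, norm_mul]
    have q1 : ‖l0-1‖ * ‖l1-1‖ < (1/2) * (1/2) :=
      mul_lt_mul'' h0 h1 (norm_nonneg _) (norm_nonneg _)
    have q2 : ‖l0-1‖ * ‖l1-1‖ * ‖l2-1‖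
        < (1/2)*(1/2)*(1/2) :=
      mul_lt_mul'' q1 h2 (mul_nonneg (norm_nonneg _) (norm_nonneg _))
        (norm_nonneg _)
    linarith
  have hE3z : (l0-1)*(l1-1)*(l2-1) = 0 := by
    rw [hE3]; exact int_abs_lt_one _ (hE3 ▸ habs3)
  have hb2 : ‖(l0-1)*(l1-1)+(l0-1)*(l2-1)+(l1-1)*(l2-1)‖ < 1 := by
    have t1 := norm_add_le ((l0-1)*(l1-1)+(l0-1)*(l2-1)) ((l1-1)*(l2-1))
    have t2 := norm_add_le ((l0-1)*(l1-1)) ((l0-1)*(l2-1))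
    simp only [norm_mul] at t1 t2
    nlinarith [norm_nonneg (l0-1), norm_nonneg (l1-1), norm_nonneg (l2-1)]
  have hE1z : (l0-1)+(l1-1)+(l2-1) = 0 := by
    have hneg : (l0-1)+(l1-1)+(l2-1)
        = -((l0-1)*(l1-1)+(l0-1)*(l2-1)+(l1-1)*(l2-1)) := by
      linear_combination hsum - hE3z
    have habs : ‖(l0-1)+(l1-1)+(l2-1)‖ < 1 := by
      rw [hneg, norm_neg]; exact hb2
    rw [hE1]; exact int_abs_lt_one _ (hE1 ▸ habs)
  have hE2z : (l0-1)*(l1-1)+(l0-1)*(l2-1)+(l1-1)*(l2-1) = 0 := by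
    linear_combination hsum - hE1z - hE3z
  have cube : ∀ x : ℂ, (x = l0 - 1 ∨ x = l1 - 1 ∨ x = l2 - 1) → x = 0 := by
    intro x hx
    have hx3 : x ^ 3 = 0 := by
      rcases hx with h | h | h <;> subst h
      · linear_combination (l0-1)^2 * hE1z - (l0-1) * hE2z + hE3z
      · linear_combination (l1-1)^2 * hE1z - (l1-1) * hE2z + hE3z
      · linear_combination (l2-1)^2 * hE1z - (l2-1) * hE2z + hE3z
    exact pow_eq_zero_iff (n := 3) (by norm_num) |>.mp hx3
  refine ⟨?_, ?_, ?_⟩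
  · have := cube (l0 - 1) (Or.inl rfl); linear_combination this
  · have := cube (l1 - 1) (Or.inr (Or.inl rfl)); linear_combination this
  · have := cube (l2 - 1) (Or.inr (Or.inr rfl)); linear_combination this
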